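/- (Dual transport equation: exponential decay of the a-derivative.) Let μ > 0, R > 1, T > 0, and let r be an admissible fusion kernel with exponent μ; set r̄_ε(a,v) := r(a,v)/(1 + ε^{2μ+2} a^μ). Let χ ∈ C¹_b(S) vanish whenever v ∉ [1/R, R] and whenever a ≤ c₀ v^{2/3} + δ₁ for some δ₁ > 0, and assume ‖χ‖_∞ + ‖∂_a χ‖_∞ ≤ 1. Let φ_ε solve ∂_t φ_ε + (1/ε) r̄_ε(a,v)(c₀ v^{2/3} − a) ∂_a φ_ε = 0 with φ_ε(T,·) = χ. Then, for all ε sufficiently small, there exists a constant C > 0, independent of ε (but possibly depending on R), such that ‖∂_a φ_ε(t)‖_∞ ≤ e^{−C(T−t)/ε} for every t ∈ [0,T]. -/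

import Mathlib

open MeasureTheory Real Set Filter Topology
open scoped ENNReal

noncomputable section

/-- `c₀ = (36π)^(1/3)`, the isoperimetric constant relating area and volume of a ball. -/
def c0 : ℝ := (36 * Real.pi) ^ ((1 : ℝ) / 3)

/-- The open quadrant `(0,∞)²` of pairs `(a,v)` (surface area, volume). -/
def Quad : Set (ℝ × ℝ) := {p | 0 < p.1 ∧ 0 < p.2}

/-- The isoperimetric region `{(a,v) : v > 0, a ≥ c₀ v^(2/3)}`. -/
def IsoRegion : Set (ℝ × ℝ) := {p | 0 < p.2 ∧ c0 * p.2 ^ ((2 : ℝ) / 3) ≤ p.1}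

/-- A nonnegative (Radon) measure on `(0,∞)²` supported in `{a ≥ c₀ v^(2/3)}`:
it gives zero mass to the complement of the isoperimetric region. -/
def IsIsoMeasure (m : Measure (ℝ × ℝ)) : Prop := m IsoRegionᶜ = 0

/-- `C₀((0,∞)²)`: continuous functions vanishing at infinity of the open quadrant
(extended by zero outside the quadrant). -/
def IsC0Quad (φ : ℝ × ℝ → ℝ) : Prop :=
  Continuous φ ∧ (∀ p, p ∉ Quad → φ p = 0) ∧
    ∀ δ > 0, ∃ Kc : Set (ℝ × ℝ), IsCompact Kc ∧ Kc ⊆ Quad ∧ ∀ p ∉ Kc, |φ p| ≤ δ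

/-- `C_c((0,∞)²)`: continuous functions with compact support contained in the quadrant. -/
def IsCcQuad (φ : ℝ × ℝ → ℝ) : Prop :=
  Continuous φ ∧ HasCompactSupport φ ∧ tsupport φ ⊆ Quad

/-- `C₀((0,∞))`: continuous functions on `(0,∞)` vanishing at infinity (extended by zero). -/
def IsC0Pos (φ : ℝ → ℝ) : Prop :=
  Continuous φ ∧ (∀ v, v ∉ Ioi (0 : ℝ) → φ v = 0) ∧
    ∀ δ > 0, ∃ Kc : Set ℝ, IsCompact Kc ∧ Kc ⊆ Ioi (0 : ℝ) ∧ ∀ v ∉ Kc, |φ v| ≤ δ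

/-- `C_c((0,∞))`: continuous functions with compact support contained in `(0,∞)`. -/
def IsCcPos (φ : ℝ → ℝ) : Prop :=
  Continuous φ ∧ HasCompactSupport φ ∧ tsupport φ ⊆ Ioi (0 : ℝ)

/-- Partial derivative in the area variable `a`. -/
def da (φ : ℝ × ℝ → ℝ) (p : ℝ × ℝ) : ℝ := deriv (fun a => φ (a, p.2)) p.1

/-- Time-dependent test functions `φ ∈ C¹_c([0,∞); C¹_c((0,∞)²))`. -/
def IsTestFun (ψ : ℝ × (ℝ × ℝ) → ℝ) : Prop :=
  ContDiff ℝ 1 ψ ∧ HasCompactSupport ψ ∧ ∀ q : ℝ × (ℝ × ℝ), q.2 ∉ Quad → ψ q = 0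

/-- The assumptions on the coagulation kernel `K`: continuity, symmetry, and the
two-sided power law bounds with constants `K₀ ≥ K₁ > 0` and exponents
`al > 0`, `be ∈ (0,1)`, `be - al ∈ (0,1)`. -/
structure IsCoagKernel (K : ℝ × ℝ → ℝ × ℝ → ℝ) (K₀ K₁ al be : ℝ) : Prop where
  cont : ContinuousOn (fun q : (ℝ × ℝ) × (ℝ × ℝ) => K q.1 q.2) (Quad ×ˢ Quad)
  symm : ∀ η η', K η η' = K η' η
  K1_pos : 0 < K₁
  K1_le_K0 : K₁ ≤ K₀
  al_pos : 0 < al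
  be_mem : be ∈ Ioo (0 : ℝ) 1
  be_sub_al_mem : be - al ∈ Ioo (0 : ℝ) 1
  lower : ∀ η ∈ Quad, ∀ η' ∈ Quad,
    K₁ * (η.2 ^ (-al) * η'.2 ^ be + η'.2 ^ (-al) * η.2 ^ be) ≤ K η η'
  upper : ∀ η ∈ Quad, ∀ η' ∈ Quad,
    K η η' ≤ K₀ * (η.2 ^ (-al) * η'.2 ^ be + η'.2 ^ (-al) * η.2 ^ be)

/-- The assumptions on an admissible fusion kernel `r`: positivity, `C¹` regularity,
two-sided power law bounds `R₀ a^mu v^sg ≤ r ≤ R₁ a^mu v^sg`, and the structural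
differential inequalities on the isoperimetric region. -/
structure IsFusionKernel (r : ℝ × ℝ → ℝ) (R₀ R₁ mu sg B : ℝ) : Prop where
  smooth : ContDiffOn ℝ 1 r Quad
  pos : ∀ η ∈ Quad, 0 < r η
  R0_pos : 0 < R₀
  R1_pos : 0 < R₁
  B_pos : 0 < B
  lower : ∀ η ∈ Quad, R₀ * η.1 ^ mu * η.2 ^ sg ≤ r η
  upper : ∀ η ∈ Quad, r η ≤ R₁ * η.1 ^ mu * η.2 ^ sg
  cond_pos : 0 < mu → ∀ η ∈ IsoRegion, 0 ≤ da r η - mu * η.1⁻¹ * r η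
  cond_nonpos : mu ≤ 0 → ∀ η ∈ IsoRegion,
    0 ≤ da r η * (η.1 - c0 * η.2 ^ ((2 : ℝ) / 3)) + r η
  cond_upper : ∀ η ∈ IsoRegion, da r η ≤ B * η.1⁻¹ * r η

/-- The weak identity at time `t` against the test function `ψ`, for the
fusion–coagulation equation with fusion coefficient `c` (the `Λ`-fusion problem
corresponds to `c = Λ⁻¹`). -/
def WeakIdentity (K : ℝ × ℝ → ℝ × ℝ → ℝ) (r : ℝ × ℝ → ℝ) (c : ℝ)
    (fin : Measure (ℝ × ℝ)) (f : ℝ → Measure (ℝ × ℝ))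
    (ψ : ℝ × (ℝ × ℝ) → ℝ) (t : ℝ) : Prop :=
  (∫ η, ψ (t, η) ∂(f t)) - (∫ η, ψ (0, η) ∂fin)
      - ∫ s in (0 : ℝ)..t, ∫ η, deriv (fun u => ψ (u, η)) s ∂(f s)
    = (∫ s in (0 : ℝ)..t, (1 / 2) *
        ∫ η, ∫ η', K η η' * (ψ (s, η + η') - ψ (s, η) - ψ (s, η')) ∂(f s) ∂(f s))
      + c * ∫ s in (0 : ℝ)..t,
          ∫ η, r η * (c0 * η.2 ^ ((2 : ℝ) / 3) - η.1) * da (fun p => ψ (s, p)) η ∂(f s)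

/-- A weak solution of the fusion–coagulation problem with fusion coefficient `c`
(power-law exponents `al`, `be` of the coagulation kernel enter the a priori moment
bound), initial datum `fin`: a weak-* continuous family of measures supported in the
isoperimetric region, with locally uniformly bounded `(v^(-al) + v^be)`-moments,
satisfying the weak identity for all test functions and times. -/
def IsWeakSolution (K : ℝ × ℝ → ℝ × ℝ → ℝ) (r : ℝ × ℝ → ℝ) (c al be : ℝ)
    (fin : Measure (ℝ × ℝ)) (f : ℝ → Measure (ℝ × ℝ)) : Prop :=
  (∀ t, 0 ≤ t → IsIsoMeasure (f t)) ∧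
  (∀ φ, IsC0Quad φ → ContinuousOn (fun t => ∫ η, φ η ∂(f t)) (Ici (0 : ℝ))) ∧
  (∀ T > (0 : ℝ), ∃ C : ℝ≥0∞, C ≠ ⊤ ∧ ∀ t ∈ Icc (0 : ℝ) T,
      (∫⁻ η, ENNReal.ofReal (η.2 ^ (-al) + η.2 ^ be) ∂(f t)) ≤ C) ∧
  (∀ ψ, IsTestFun ψ → ∀ t, 0 ≤ t → WeakIdentity K r c fin f ψ t)

/-- The regularized fusion kernel `r̄_ε(a,v) = r(a,v)/(1 + ε^(2μ+2) a^μ)`. -/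
def rbarFn (r : ℝ × ℝ → ℝ) (mu ε : ℝ) (η : ℝ × ℝ) : ℝ :=
  r η / (1 + ε ^ (2 * mu + 2) * η.1 ^ mu)

end


/-! ### Auxiliary lemmas for the proof -/

section AuxDT

open Real Set Filter Topology

lemma c0_pos : 0 < c0 := Real.rpow_pos_of_pos (by positivity) _

lemma isOpen_quad : IsOpen Quad := by
  have : Quad = {p : ℝ × ℝ | 0 < p.1} ∩ {p : ℝ × ℝ | 0 < p.2} := rfl
  rw [this]
  exact (isOpen_lt continuous_const continuous_fst).inter
    (isOpen_lt continuous_const continuous_snd)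

/-- The "strict" isoperimetric region, an open subset of `IsoRegion`. -/
def IsoOpen : Set (ℝ × ℝ) := {p : ℝ × ℝ | 0 < p.2 ∧ c0 * p.2 ^ ((2 : ℝ) / 3) < p.1}

lemma isOpen_isoOpen : IsOpen IsoOpen := by
  have h1 : IsOpen {p : ℝ × ℝ | 0 < p.2} := isOpen_lt continuous_const continuous_snd
  have h2 : ContinuousOn (fun p : ℝ × ℝ => p.1 - c0 * p.2 ^ ((2 : ℝ) / 3))
      {p : ℝ × ℝ | 0 < p.2} := by
    refine continuousOn_fst.sub (continuousOn_const.mul ?_)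
    intro p hp
    exact ((Real.continuousAt_rpow_const _ _ (Or.inl (ne_of_gt hp))).comp
      continuous_snd.continuousAt).continuousWithinAt
  have : IsoOpen = {p : ℝ × ℝ | 0 < p.2} ∩
      (fun p : ℝ × ℝ => p.1 - c0 * p.2 ^ ((2 : ℝ) / 3)) ⁻¹' (Ioi 0) := by
    ext p; simp [IsoOpen, sub_pos, and_comm]
  rw [this]
  exact h2.isOpen_inter_preimage h1 isOpen_Ioi

lemma isoOpen_subset : IsoOpen ⊆ IsoRegion := fun p hp => ⟨hp.1, le_of_lt hp.2⟩

lemma isoOpen_subset_interior : IsoOpen ⊆ interior IsoRegion :=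
  interior_maximal isoOpen_subset isOpen_isoOpen

lemma mem_quad_of_iso {a v : ℝ} (hv : 0 < v) (ha : c0 * v ^ ((2 : ℝ) / 3) ≤ a) :
    (a, v) ∈ Quad :=
  ⟨lt_of_lt_of_le (mul_pos c0_pos (Real.rpow_pos_of_pos hv _)) ha, hv⟩

end AuxDT
section AuxDT2

open Real Set Filter Topology

/-- The characteristic vector field at fixed volume `v`. -/
noncomputable def Fv (r : ℝ × ℝ → ℝ) (mu ε v : ℝ) : ℝ → ℝ :=
  fun a => ε⁻¹ * rbarFn r mu ε (a, v) * (c0 * v ^ ((2 : ℝ) / 3) - a)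

variable {r : ℝ × ℝ → ℝ} {R₀ R₁ mu sg B : ℝ}

lemma slice_hasDerivAt (hr : IsFusionKernel r R₀ R₁ mu sg B)
    {a v : ℝ} (ha : 0 < a) (hv : 0 < v) :
    HasDerivAt (fun x => r (x, v)) (da r (a, v)) a := by
  have hq : (a, v) ∈ Quad := ⟨ha, hv⟩
  have hdiff : DifferentiableAt ℝ r (a, v) :=
    (hr.smooth.contDiffAt (isOpen_quad.mem_nhds hq)).differentiableAt one_ne_zero
  have hslice : DifferentiableAt ℝ (fun x : ℝ => r (x, v)) a :=
    hdiff.comp a (differentiableAt_id.prodMk (differentiableAt_const v))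
  exact hslice.hasDerivAt

lemma denom_pos {ε a : ℝ} (hε : 0 < ε) (ha : 0 < a) :
    0 < 1 + ε ^ (2 * mu + 2) * a ^ mu := by positivity

lemma rbar_pos (hr : IsFusionKernel r R₀ R₁ mu sg B) {ε a v : ℝ}
    (hε : 0 < ε) (ha : 0 < a) (hv : 0 < v) : 0 < rbarFn r mu ε (a, v) :=
  div_pos (hr.pos _ ⟨ha, hv⟩) (denom_pos hε ha)

/-- Derivative of the characteristic field, with the one-sided bound on the
isoperimetric region. -/
lemma Fv_hasDerivAt (hr : IsFusionKernel r R₀ R₁ mu sg B) (hmu : 0 < mu)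
    {ε v a : ℝ} (hε : 0 < ε) (hv : 0 < v) (ha : 0 < a) :
    ∃ d : ℝ, HasDerivAt (Fv r mu ε v) d a ∧
      (c0 * v ^ ((2 : ℝ) / 3) ≤ a → d ≤ -(ε⁻¹ * rbarFn r mu ε (a, v))) := by
  set β := c0 * v ^ ((2 : ℝ) / 3) with hβ
  have hg : HasDerivAt (fun x => r (x, v)) (da r (a, v)) a := slice_hasDerivAt hr ha hv
  have hE : HasDerivAt (fun x : ℝ => ε ^ (2 * mu + 2) * x ^ mu) (ε ^ (2 * mu + 2) * (mu * a ^ (mu - 1))) a :=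
    (Real.hasDerivAt_rpow_const (Or.inl ha.ne')).const_mul _
  have hden : HasDerivAt (fun x : ℝ => 1 + ε ^ (2 * mu + 2) * x ^ mu) (ε ^ (2 * mu + 2) * (mu * a ^ (mu - 1))) a :=
    hE.const_add 1
  have hden_ne : 1 + ε ^ (2 * mu + 2) * a ^ mu ≠ 0 := (denom_pos hε ha).ne'
  set ρ' := (da r (a, v) * (1 + ε ^ (2 * mu + 2) * a ^ mu) -
      r (a, v) * (ε ^ (2 * mu + 2) * (mu * a ^ (mu - 1)))) / (1 + ε ^ (2 * mu + 2) * a ^ mu) ^ 2 with hρ'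
  have hρ : HasDerivAt (fun x => r (x, v) / (1 + ε ^ (2 * mu + 2) * x ^ mu)) ρ' a := hg.div hden hden_ne
  have hlin : HasDerivAt (fun x : ℝ => β - x) (-1) a := by
    simpa using (hasDerivAt_id a).const_sub β
  have hF : HasDerivAt (Fv r mu ε v)
      (ε⁻¹ * ρ' * (β - a) + ε⁻¹ * rbarFn r mu ε (a, v) * (-1)) a :=
    (hρ.const_mul ε⁻¹).mul hlin
  refine ⟨_, hF, fun hβa => ?_⟩
  -- on the isoperimetric region the derivative of `rbar` in `a` is nonnegative
  have hiso : (a, v) ∈ IsoRegion := ⟨hv, hβa⟩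
  have hcond := hr.cond_pos hmu (a, v) hiso
  have hrpos : 0 < r (a, v) := hr.pos _ ⟨ha, hv⟩
  have hE0 : 0 ≤ ε ^ (2 * mu + 2) * a ^ mu := by positivity
  have hkey : ε ^ (2 * mu + 2) * (mu * a ^ (mu - 1)) = mu * a⁻¹ * (ε ^ (2 * mu + 2) * a ^ mu) := by
    rw [Real.rpow_sub_one ha.ne']
    field_simp
  have hρ'0 : 0 ≤ ρ' := by
    rw [hρ']
    apply div_nonneg _ (by positivity)
    rw [hkey]
    have h1 : mu * a⁻¹ * r (a, v) ≤ da r (a, v) := by linarith [hcond]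
    have h2 : mu * a⁻¹ * r (a, v) * (1 + ε ^ (2 * mu + 2) * a ^ mu) ≤
        da r (a, v) * (1 + ε ^ (2 * mu + 2) * a ^ mu) :=
      mul_le_mul_of_nonneg_right h1 (by positivity)
    have ha' : 0 < a⁻¹ := inv_pos.mpr ha
    nlinarith [hrpos, hE0, mul_pos (mul_pos hmu ha') hrpos]
  have h3 : ε⁻¹ * ρ' * (β - a) ≤ 0 := by
    apply mul_nonpos_of_nonneg_of_nonpos (by positivity) (by linarith)
  linarith
end AuxDT2
section AuxDT3

open Real Set Filter Topology

variable {r : ℝ × ℝ → ℝ} {R₀ R₁ mu sg B : ℝ}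

/-- Uniform positive lower bound on the regularized kernel on the isoperimetric
region with `v ∈ [1/R, R]`, for `ε ∈ (0,1]`, independent of `ε`. -/
lemma rbar_lower (hr : IsFusionKernel r R₀ R₁ mu sg B) (hmu : 0 < mu)
    {R : ℝ} (hR : 1 < R) {ε v a : ℝ} (hε : 0 < ε) (hε1 : ε ≤ 1)
    (hv1 : 1 / R ≤ v) (hv2 : v ≤ R) (hβa : c0 * v ^ ((2 : ℝ) / 3) ≤ a) :
    R₀ * min ((1 / R) ^ sg) (R ^ sg) *
      ((c0 * (1 / R) ^ ((2 : ℝ) / 3)) ^ mu / (1 + (c0 * (1 / R) ^ ((2 : ℝ) / 3)) ^ mu))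
        ≤ rbarFn r mu ε (a, v) := by
  have hR0 : 0 < R := lt_trans one_pos hR
  have hiR : 0 < 1 / R := by positivity
  have hv : 0 < v := lt_of_lt_of_le hiR hv1
  set α := c0 * (1 / R) ^ ((2 : ℝ) / 3) with hα
  have hα0 : 0 < α := mul_pos c0_pos (Real.rpow_pos_of_pos hiR _)
  have hαa : α ≤ a := by
    refine le_trans ?_ hβa
    exact mul_le_mul_of_nonneg_left
      (Real.rpow_le_rpow hiR.le hv1 (by norm_num)) c0_pos.le
  have ha : 0 < a := lt_of_lt_of_le hα0 hαa
  have haμ : 0 < a ^ mu := Real.rpow_pos_of_pos ha _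
  have hαμ : 0 < α ^ mu := Real.rpow_pos_of_pos hα0 _
  have hαaμ : α ^ mu ≤ a ^ mu := Real.rpow_le_rpow hα0.le hαa hmu.le
  -- ε ^ (2μ+2) ≤ 1
  have hεp : ε ^ (2 * mu + 2) ≤ 1 := Real.rpow_le_one hε.le hε1 (by linarith)
  have hden : 1 + ε ^ (2 * mu + 2) * a ^ mu ≤ 1 + a ^ mu := by
    have : ε ^ (2 * mu + 2) * a ^ mu ≤ 1 * a ^ mu :=
      mul_le_mul_of_nonneg_right hεp haμ.le
    linarith
  have hvsg : min ((1 / R) ^ sg) (R ^ sg) ≤ v ^ sg := by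
    rcases le_or_gt 0 sg with hsg | hsg
    · exact le_trans (min_le_left _ _) (Real.rpow_le_rpow hiR.le hv1 hsg)
    · exact le_trans (min_le_right _ _) (Real.rpow_le_rpow_of_nonpos hv hv2 hsg.le)
  have hvsg0 : 0 < min ((1 / R) ^ sg) (R ^ sg) :=
    lt_min (Real.rpow_pos_of_pos hiR _) (Real.rpow_pos_of_pos hR0 _)
  have hmono : α ^ mu / (1 + α ^ mu) ≤ a ^ mu / (1 + a ^ mu) := by
    rw [div_le_div_iff₀ (by positivity) (by positivity)]
    nlinarith
  have hstep : R₀ * min ((1 / R) ^ sg) (R ^ sg) * (α ^ mu / (1 + α ^ mu)) ≤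
      R₀ * v ^ sg * (a ^ mu / (1 + a ^ mu)) := by
    have h1 : 0 < R₀ := hr.R0_pos
    have h2 : 0 ≤ α ^ mu / (1 + α ^ mu) := by positivity
    have := mul_le_mul (mul_le_mul le_rfl hvsg hvsg0.le h1.le) hmono h2
      (by positivity : (0:ℝ) ≤ R₀ * v ^ sg)
    exact this
  refine le_trans hstep ?_
  have hlow := hr.lower (a, v) ⟨ha, hv⟩
  have : R₀ * v ^ sg * (a ^ mu / (1 + a ^ mu)) =
      R₀ * a ^ mu * v ^ sg / (1 + a ^ mu) := by ring
  rw [this, rbarFn]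
  exact div_le_div₀ (hr.pos _ ⟨ha, hv⟩).le hlow (denom_pos hε ha) hden
end AuxDT3
section AuxDT4

open Real Set Filter Topology
open scoped NNReal

variable {r : ℝ × ℝ → ℝ} {R₀ R₁ mu sg B : ℝ}

/-- Explicit formula for the derivative of `Fv`. -/
noncomputable def FvD (r : ℝ × ℝ → ℝ) (mu ε v : ℝ) : ℝ → ℝ := fun a =>
  ε⁻¹ * ((da r (a, v) * (1 + ε ^ (2 * mu + 2) * a ^ mu) -
      r (a, v) * (ε ^ (2 * mu + 2) * (mu * a ^ (mu - 1)))) /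
        (1 + ε ^ (2 * mu + 2) * a ^ mu) ^ 2) * (c0 * v ^ ((2 : ℝ) / 3) - a)
    + ε⁻¹ * rbarFn r mu ε (a, v) * (-1)

lemma Fv_hasDerivAt' (hr : IsFusionKernel r R₀ R₁ mu sg B)
    {ε v a : ℝ} (hε : 0 < ε) (hv : 0 < v) (ha : 0 < a) :
    HasDerivAt (Fv r mu ε v) (FvD r mu ε v a) a := by
  have hg : HasDerivAt (fun x => r (x, v)) (da r (a, v)) a := slice_hasDerivAt hr ha hv
  have hE : HasDerivAt (fun x : ℝ => ε ^ (2 * mu + 2) * x ^ mu)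
      (ε ^ (2 * mu + 2) * (mu * a ^ (mu - 1))) a :=
    (Real.hasDerivAt_rpow_const (Or.inl ha.ne')).const_mul _
  have hden : HasDerivAt (fun x : ℝ => 1 + ε ^ (2 * mu + 2) * x ^ mu)
      (ε ^ (2 * mu + 2) * (mu * a ^ (mu - 1))) a := hE.const_add 1
  have hden_ne : 1 + ε ^ (2 * mu + 2) * a ^ mu ≠ 0 := (denom_pos hε ha).ne'
  have hρ : HasDerivAt (fun x => r (x, v) / (1 + ε ^ (2 * mu + 2) * x ^ mu))
      ((da r (a, v) * (1 + ε ^ (2 * mu + 2) * a ^ mu) -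
        r (a, v) * (ε ^ (2 * mu + 2) * (mu * a ^ (mu - 1)))) /
          (1 + ε ^ (2 * mu + 2) * a ^ mu) ^ 2) a := hg.div hden hden_ne
  have hlin : HasDerivAt (fun x : ℝ => c0 * v ^ ((2 : ℝ) / 3) - x) (-1) a := by
    simpa using (hasDerivAt_id a).const_sub (c0 * v ^ ((2 : ℝ) / 3))
  exact (hρ.const_mul ε⁻¹).mul hlin

lemma FvD_nonpos (hr : IsFusionKernel r R₀ R₁ mu sg B) (hmu : 0 < mu)
    {ε v a : ℝ} (hε : 0 < ε) (hv : 0 < v) (ha : 0 < a)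
    (hβa : c0 * v ^ ((2 : ℝ) / 3) ≤ a) :
    FvD r mu ε v a ≤ -(ε⁻¹ * rbarFn r mu ε (a, v)) := by
  obtain ⟨d, hd, hbd⟩ := Fv_hasDerivAt hr hmu hε hv ha
  have : d = FvD r mu ε v a := by
    have h2 := Fv_hasDerivAt' hr hε hv ha
    exact hd.unique h2
  rw [← this]
  exact hbd hβa

lemma da_eq_fderiv (hr : IsFusionKernel r R₀ R₁ mu sg B)
    {a v : ℝ} (ha : 0 < a) (hv : 0 < v) :
    da r (a, v) = fderiv ℝ r (a, v) (1, 0) := by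
  have hdiff : DifferentiableAt ℝ r (a, v) :=
    (hr.smooth.contDiffAt (isOpen_quad.mem_nhds ⟨ha, hv⟩)).differentiableAt one_ne_zero
  have h : HasDerivAt (fun x => r (x, v)) (fderiv ℝ r (a, v) (1, 0)) a :=
    hdiff.hasFDerivAt.comp_hasDerivAt a ((hasDerivAt_id a).prodMk (hasDerivAt_const a v))
  exact h.deriv

lemma FvD_continuousOn (hr : IsFusionKernel r R₀ R₁ mu sg B)
    {ε v : ℝ} (hε : 0 < ε) (hv : 0 < v) :
    ContinuousOn (FvD r mu ε v) (Ioi (0 : ℝ)) := by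
  have hmt : ∀ a ∈ Ioi (0 : ℝ), (a, v) ∈ Quad := fun a ha => ⟨ha, hv⟩
  have hι : Continuous (fun a : ℝ => (a, v)) := continuous_id.prodMk continuous_const
  have hc_r : ContinuousOn (fun a : ℝ => r (a, v)) (Ioi 0) :=
    (hr.smooth.continuousOn.comp hι.continuousOn hmt)
  have hc_da : ContinuousOn (fun a : ℝ => da r (a, v)) (Ioi 0) := by
    have hfd : ContinuousOn (fun p => fderiv ℝ r p) Quad :=
      hr.smooth.continuousOn_fderiv_of_isOpen isOpen_quad le_rfl
    have h1 : ContinuousOn (fun a : ℝ => (fderiv ℝ r (a, v)) (1, 0)) (Ioi 0) :=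
      (ContinuousLinearMap.apply ℝ ℝ (((1 : ℝ), (0 : ℝ)) : ℝ × ℝ)).continuous.comp_continuousOn
        (hfd.comp hι.continuousOn hmt)
    exact h1.congr fun a ha => da_eq_fderiv hr ha hv
  have hc_pow : ContinuousOn (fun a : ℝ => a ^ mu) (Ioi (0 : ℝ)) := fun a ha =>
    (Real.continuousAt_rpow_const a mu (Or.inl (ne_of_gt ha))).continuousWithinAt
  have hc_pow' : ContinuousOn (fun a : ℝ => a ^ (mu - 1)) (Ioi (0 : ℝ)) := fun a ha =>
    (Real.continuousAt_rpow_const a (mu - 1) (Or.inl (ne_of_gt ha))).continuousWithinAt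
  have hc_den : ContinuousOn (fun a : ℝ => 1 + ε ^ (2 * mu + 2) * a ^ mu) (Ioi 0) :=
    continuousOn_const.add (continuousOn_const.mul hc_pow)
  have hden_ne : ∀ a ∈ Ioi (0 : ℝ), 1 + ε ^ (2 * mu + 2) * a ^ mu ≠ 0 :=
    fun a ha => (denom_pos hε ha).ne'
  have hc_rbar : ContinuousOn (fun a : ℝ => rbarFn r mu ε (a, v)) (Ioi 0) :=
    hc_r.div hc_den hden_ne
  refine ContinuousOn.add ?_ ((continuousOn_const.mul hc_rbar).mul continuousOn_const)
  refine ContinuousOn.mul (continuousOn_const.mul (ContinuousOn.div ?_ (hc_den.pow 2)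
    fun a ha => pow_ne_zero 2 (hden_ne a ha))) (continuousOn_const.sub continuousOn_id)
  exact (hc_da.mul hc_den).sub (hc_r.mul (continuousOn_const.mul
    (continuousOn_const.mul hc_pow')))

/-- Lipschitz bound for `Fv` on a compact interval. -/
lemma Fv_lipschitzOnWith (hr : IsFusionKernel r R₀ R₁ mu sg B)
    {ε v b M : ℝ} (hε : 0 < ε) (hv : 0 < v) (hb : 0 < b) (hbM : b ≤ M) :
    ∃ L : ℝ≥0, LipschitzOnWith L (Fv r mu ε v) (Icc b M) := by
  obtain ⟨L₀, hL₀⟩ := (isCompact_Icc (a := b) (b := M)).exists_bound_of_continuousOn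
    ((FvD_continuousOn hr hε hv).mono (fun x hx => lt_of_lt_of_le hb hx.1))
  refine ⟨⟨max L₀ 0, le_max_right _ _⟩, ?_⟩
  refine lipschitzOnWith_iff_dist_le_mul.2 ?_
  have key : ∀ x ∈ Icc b M, ∀ y ∈ Icc b M, x ≤ y →
      dist (Fv r mu ε v y) (Fv r mu ε v x) ≤ max L₀ 0 * dist y x := by
    intro x hx y hy hxy
    have hsub : Icc x y ⊆ Icc b M := Icc_subset_Icc hx.1 hy.2
    have hder : ∀ z ∈ Icc x y, HasDerivWithinAt (Fv r mu ε v) (FvD r mu ε v z) (Icc x y) z :=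
      fun z hz => (Fv_hasDerivAt' hr hε hv (lt_of_lt_of_le hb (hsub hz).1)).hasDerivWithinAt
    have hbound : ∀ z ∈ Ico x y, ‖FvD r mu ε v z‖ ≤ max L₀ 0 :=
      fun z hz => le_trans (hL₀ z (hsub ⟨hz.1, hz.2.le⟩)) (le_max_left _ _)
    have := norm_image_sub_le_of_norm_deriv_le_segment' hder hbound y ⟨hxy, le_rfl⟩
    rw [Real.norm_eq_abs] at this
    rw [Real.dist_eq, Real.dist_eq, abs_of_nonneg (sub_nonneg.mpr hxy)]
    exact this
  intro x hx y hy
  rcases le_total x y with h | h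
  · rw [dist_comm, dist_comm x y]; exact key x hx y hy h
  · exact key y hy x hx h
end AuxDT4
section AuxDT5

open Real Set Filter Topology
open scoped NNReal

variable {r : ℝ × ℝ → ℝ} {R₀ R₁ mu sg B : ℝ}

/-- The truncated characteristic field (clamped to `[β, M]`), globally Lipschitz. -/
noncomputable def FvC (r : ℝ × ℝ → ℝ) (mu ε v M : ℝ) : ℝ → ℝ :=
  fun x => Fv r mu ε v (min (max x (c0 * v ^ ((2 : ℝ) / 3))) M)

lemma clamp_mem {β M x : ℝ} (hβM : β ≤ M) : min (max x β) M ∈ Icc β M :=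
  ⟨le_min (le_max_right _ _) hβM, min_le_right _ _⟩

lemma clamp_eq {β M x : ℝ} (hx : x ∈ Icc β M) : min (max x β) M = x := by
  rw [max_eq_left hx.1, min_eq_left hx.2]

lemma clamp_lipschitz (β M : ℝ) : LipschitzWith 1 (fun x : ℝ => min (max x β) M) :=
  (LipschitzWith.id.max_const β).min_const M

lemma Fv_eval_beta {ε v : ℝ} : Fv r mu ε v (c0 * v ^ ((2 : ℝ) / 3)) = 0 := by
  simp [Fv]

lemma Fv_nonpos (hr : IsFusionKernel r R₀ R₁ mu sg B) {ε v y : ℝ}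
    (hε : 0 < ε) (hv : 0 < v) (hy : c0 * v ^ ((2 : ℝ) / 3) ≤ y) :
    Fv r mu ε v y ≤ 0 := by
  have hy0 : 0 < y := lt_of_lt_of_le (mul_pos c0_pos (Real.rpow_pos_of_pos hv _)) hy
  have h1 : 0 ≤ ε⁻¹ * rbarFn r mu ε (y, v) :=
    le_of_lt (mul_pos (inv_pos.mpr hε) (rbar_pos hr hε hy0 hv))
  exact mul_nonpos_of_nonneg_of_nonpos h1 (by linarith)

lemma FvC_lipschitz {ε v M : ℝ} {L : ℝ≥0}
    (hβM : c0 * v ^ ((2 : ℝ) / 3) ≤ M)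
    (hL : LipschitzOnWith L (Fv r mu ε v) (Icc (c0 * v ^ ((2 : ℝ) / 3)) M)) :
    LipschitzWith L (FvC r mu ε v M) := by
  intro x y
  have h1 := hL (clamp_mem (x := x) hβM) (clamp_mem (x := y) hβM)
  have h2 := clamp_lipschitz (c0 * v ^ ((2 : ℝ) / 3)) M x y
  calc edist (FvC r mu ε v M x) (FvC r mu ε v M y) ≤
      L * edist (min (max x (c0 * v ^ ((2 : ℝ) / 3))) M)
        (min (max y (c0 * v ^ ((2 : ℝ) / 3))) M) := h1
    _ ≤ L * edist x y := by
        refine mul_le_mul_right ?_ _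
        simpa using h2

/-- Construction of the characteristic flow with all required properties. -/
lemma flow_exists (hr : IsFusionKernel r R₀ R₁ mu sg B)
    {ε v : ℝ} (hε : 0 < ε) (hv : 0 < v)
    {L : ℝ≥0} {M : ℝ} (hβM : c0 * v ^ ((2 : ℝ) / 3) ≤ M)
    (hL : LipschitzOnWith L (Fv r mu ε v) (Icc (c0 * v ^ ((2 : ℝ) / 3)) M))
    {t T a₀ : ℝ} (htT : t ≤ T) (ha₀ : a₀ ∈ Icc (c0 * v ^ ((2 : ℝ) / 3)) M) :
    ∃ A : ℝ → ℝ, A t = a₀ ∧ ContinuousOn A (Icc t T) ∧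
      (∀ s ∈ Icc t T, A s ∈ Icc (c0 * v ^ ((2 : ℝ) / 3)) M) ∧
      (∀ s ∈ Icc t T, A s ≤ a₀) ∧
      (∀ s ∈ Ico t T, HasDerivWithinAt A (FvC r mu ε v M (A s)) (Ici s) s) ∧
      (∀ s ∈ Ioo t T, HasDerivAt A (Fv r mu ε v (A s)) s) ∧
      (c0 * v ^ ((2 : ℝ) / 3) < a₀ → ∀ s ∈ Icc t T, c0 * v ^ ((2 : ℝ) / 3) < A s) := by
  set β := c0 * v ^ ((2 : ℝ) / 3) with hβdef
  have hβ0 : 0 < β := mul_pos c0_pos (Real.rpow_pos_of_pos hv _)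
  have hLc : LipschitzWith L (FvC r mu ε v M) := FvC_lipschitz hβM hL
  have hFvCβ : FvC r mu ε v M β = 0 := by
    rw [FvC, clamp_eq ⟨le_rfl, hβM⟩]; exact Fv_eval_beta
  have hFc_bd : ∀ x : ℝ, ‖FvC r mu ε v M x‖ ≤ L * (M - β) := by
    intro x
    have h1 : dist (FvC r mu ε v M x) (FvC r mu ε v M β) ≤
        L * dist (min (max x β) M) (min (max β β) M) := by
      have := hL (clamp_mem (x := x) hβM) (clamp_mem (x := β) hβM)
      exact LipschitzOnWith.dist_le_mul (by
        intro p hp q hq; exact hL hp hq) _ (clamp_mem hβM) _ (clamp_mem hβM)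
    rw [hFvCβ] at h1
    have h2 : dist (min (max x β) M) (min (max β β) M) ≤ M - β := by
      rw [Real.dist_eq, abs_le]
      have hx := clamp_mem (x := x) (M := M) hβM
      have hb := clamp_mem (x := β) (M := M) hβM
      constructor <;> [linarith [hx.1, hx.2, hb.1, hb.2]; linarith [hx.1, hx.2, hb.1, hb.2]]
    calc ‖FvC r mu ε v M x‖ = dist (FvC r mu ε v M x) 0 := by
          rw [Real.dist_eq, sub_zero, Real.norm_eq_abs]
      _ ≤ L * (M - β) := le_trans h1 (mul_le_mul_of_nonneg_left h2 L.2)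
  have hMβ : (0 : ℝ) ≤ M - β := by linarith [hβM]
  have hpl : IsPicardLindelof (fun _ x => FvC r mu ε v M x) (tmin := t) (tmax := T)
      ⟨t, ⟨le_rfl, htT⟩⟩ a₀
      ⟨L * (M - β) * (T - t), mul_nonneg (mul_nonneg L.2 hMβ) (by linarith)⟩ 0
      ⟨L * (M - β), mul_nonneg L.2 hMβ⟩ L :=
    IsPicardLindelof.of_time_independent (fun x _ => hFc_bd x) hLc.lipschitzOnWith (by
      show (L : ℝ) * (M - β) * max (T - t) (t - t) ≤ (L : ℝ) * (M - β) * (T - t) - 0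
      rw [sub_self, max_eq_left (by linarith : (0:ℝ) ≤ T - t), sub_zero])
  obtain ⟨A, hA0, hA'⟩ := hpl.exists_eq_forall_mem_Icc_hasDerivWithinAt₀
  have hA0 : A t = a₀ := hA0
  have hAc : ContinuousOn A (Icc t T) := fun s hs => (hA' s hs).continuousWithinAt
  have hAIci : ∀ s ∈ Ico t T, HasDerivWithinAt A (FvC r mu ε v M (A s)) (Ici s) s :=
    fun s hs => (hA' s ⟨hs.1, hs.2.le⟩).mono_of_mem_nhdsWithin (Icc_mem_nhdsGE_of_mem hs)
  -- lower invariance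
  have hlow : ∀ s ∈ Icc t T, β ≤ A s := by
    by_contra hcon
    push_neg at hcon
    obtain ⟨s₁, hs₁, hAs₁⟩ := hcon
    have hts₁ : t ≤ s₁ := hs₁.1
    have hivt : β ∈ A '' Icc t s₁ := by
      apply intermediate_value_Icc' hts₁ (hAc.mono (Icc_subset_Icc le_rfl hs₁.2))
      rw [hA0]
      exact ⟨le_of_lt hAs₁, ha₀.1⟩
    obtain ⟨s₂, hs₂, hAs₂⟩ := hivt
    have huniq : EqOn A (fun _ => β) (Icc s₂ T) := by
      refine ODE_solution_unique_of_mem_Icc_right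
        (v := fun _ x => FvC r mu ε v M x) (s := fun _ => (univ : Set ℝ)) (K := L)
        (fun _ _ => hLc.lipschitzOnWith)
        (hAc.mono (Icc_subset_Icc hs₂.1 le_rfl)) ?_
        (fun _ _ => mem_univ _) continuousOn_const ?_ (fun _ _ => mem_univ _) (by
          simpa using hAs₂)
      · intro u hu
        exact hAIci u ⟨le_trans hs₂.1 hu.1, hu.2⟩
      · intro u _
        simpa [hFvCβ] using hasDerivWithinAt_const u (Ici u) β
    have : A s₁ = β := huniq ⟨hs₂.2, hs₁.2⟩
    exact absurd this (ne_of_lt hAs₁)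
  -- interior derivative w.r.t. the untruncated field
  have hDint : ∀ s ∈ Ioo t T, HasDerivAt A (FvC r mu ε v M (A s)) s := fun s hs =>
    (hA' s (Ioo_subset_Icc_self hs)).hasDerivAt (Icc_mem_nhds hs.1 hs.2)
  -- upper invariance via antitonicity
  have hanti : AntitoneOn A (Icc t T) := by
    apply antitoneOn_of_deriv_nonpos (convex_Icc t T) hAc
    · intro s hs
      rw [interior_Icc] at hs
      exact (hDint s hs).differentiableAt.differentiableWithinAt
    · intro s hs
      rw [interior_Icc] at hs
      rw [(hDint s hs).deriv]
      have hcm := clamp_mem (x := A s) (M := M) hβM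
      exact Fv_nonpos hr hε hv hcm.1
  have hupper : ∀ s ∈ Icc t T, A s ≤ a₀ := by
    intro s hs
    have := hanti ⟨le_rfl, htT⟩ hs hs.1
    rwa [hA0] at this
  have hmem : ∀ s ∈ Icc t T, A s ∈ Icc β M :=
    fun s hs => ⟨hlow s hs, le_trans (hupper s hs) ha₀.2⟩
  have hclampA : ∀ s ∈ Icc t T, min (max (A s) β) M = A s := fun s hs => clamp_eq (hmem s hs)
  have hDint' : ∀ s ∈ Ioo t T, HasDerivAt A (Fv r mu ε v (A s)) s := by
    intro s hs
    have := hDint s hs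
    rwa [FvC, hclampA s (Ioo_subset_Icc_self hs)] at this
  refine ⟨A, hA0, hAc, hmem, hupper, hAIci, hDint', ?_⟩
  -- strict barrier
  intro hstrict s hs
  have humono : MonotoneOn (fun s => Real.exp (L * s) * (A s - β)) (Icc t T) := by
    apply monotoneOn_of_deriv_nonneg (convex_Icc t T)
    · exact ((Real.continuous_exp.comp (continuous_const.mul continuous_id)).continuousOn.mul
        (hAc.sub continuousOn_const))
    · intro u hu
      rw [interior_Icc] at hu
      exact ((((hasDerivAt_id u).const_mul (L : ℝ)).exp.mul
        ((hDint u hu).sub_const β)).differentiableAt).differentiableWithinAt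
    · intro u hu
      rw [interior_Icc] at hu
      have hder : HasDerivAt (fun s => Real.exp (L * s) * (A s - β))
          (Real.exp (L * u) * ((L : ℝ) * 1) * (A u - β) +
            Real.exp (L * u) * Fv r mu ε v (A u)) u :=
        (((hasDerivAt_id u).const_mul (L : ℝ)).exp.mul ((hDint' u hu).sub_const β))
      rw [hder.deriv]
      have hu' : u ∈ Icc t T := Ioo_subset_Icc_self hu
      have hAu : A u ∈ Icc β M := hmem u hu'
      have hlip : |Fv r mu ε v (A u) - Fv r mu ε v β| ≤ L * |A u - β| := by
        have := hL.dist_le_mul _ hAu _ ⟨le_rfl, hβM⟩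
        rwa [Real.dist_eq, Real.dist_eq] at this
      have habs : |A u - β| = A u - β := abs_of_nonneg (by linarith [hAu.1])
      rw [Fv_eval_beta, sub_zero, habs] at hlip
      have h1 : -(L * (A u - β)) ≤ Fv r mu ε v (A u) := by
        rcases abs_le.mp hlip with ⟨h, _⟩
        linarith
      have h2 : 0 < Real.exp (L * u) := Real.exp_pos _
      nlinarith [hAu.1]
  have hst : Real.exp ((L : ℝ) * t) * (A t - β) ≤ Real.exp ((L : ℝ) * s) * (A s - β) :=
    humono ⟨le_rfl, htT⟩ hs hs.1
  rw [hA0] at hst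
  have h3 : 0 < Real.exp ((L : ℝ) * t) * (a₀ - β) :=
    mul_pos (Real.exp_pos _) (by linarith)
  have h4 : 0 < Real.exp ((L : ℝ) * s) * (A s - β) := lt_of_lt_of_le h3 hst
  nlinarith [Real.exp_pos ((L : ℝ) * s), h4]
end AuxDT5
section AuxDT6

open Real Set Filter Topology
open scoped NNReal

variable {r : ℝ × ℝ → ℝ} {R₀ R₁ mu sg B : ℝ}

/-- Mean value estimate: the characteristic field is one-sidedly contracting at rate
`Cc/ε` on `[β, ∞)`. -/
lemma Fv_decr (hr : IsFusionKernel r R₀ R₁ mu sg B) (hmu : 0 < mu)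
    {ε v : ℝ} (hε : 0 < ε) (hv : 0 < v)
    {Cc : ℝ} (hCc : ∀ a : ℝ, c0 * v ^ ((2 : ℝ) / 3) ≤ a → Cc ≤ rbarFn r mu ε (a, v))
    {x y : ℝ} (hx : c0 * v ^ ((2 : ℝ) / 3) ≤ x) (hxy : x < y) :
    Fv r mu ε v y - Fv r mu ε v x ≤ -(ε⁻¹ * Cc) * (y - x) := by
  have hβ0 : 0 < c0 * v ^ ((2 : ℝ) / 3) := mul_pos c0_pos (Real.rpow_pos_of_pos hv _)
  have hx0 : 0 < x := lt_of_lt_of_le hβ0 hx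
  have hcont : ContinuousOn (Fv r mu ε v) (Icc x y) := fun z hz =>
    (Fv_hasDerivAt' hr hε hv (lt_of_lt_of_le hx0 hz.1)).continuousAt.continuousWithinAt
  have hderiv : ∀ z ∈ Ioo x y, HasDerivAt (Fv r mu ε v) (FvD r mu ε v z) z :=
    fun z hz => Fv_hasDerivAt' hr hε hv (lt_trans hx0 hz.1)
  obtain ⟨c, hc, heq⟩ := exists_hasDerivAt_eq_slope (Fv r mu ε v) (FvD r mu ε v) hxy hcont hderiv
  have hβc : c0 * v ^ ((2 : ℝ) / 3) ≤ c := le_trans hx hc.1.le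
  have hc0 : 0 < c := lt_of_lt_of_le hβ0 hβc
  have hbd : FvD r mu ε v c ≤ -(ε⁻¹ * Cc) := by
    refine le_trans (FvD_nonpos hr hmu hε hv hc0 hβc) ?_
    have := hCc c hβc
    have hεinv : 0 < ε⁻¹ := inv_pos.mpr hε
    nlinarith
  rw [heq] at hbd
  rw [div_le_iff₀ (by linarith : 0 < y - x)] at hbd
  linarith
/-- Comparison of two characteristic flows: ordering and exponential contraction. -/
lemma flow_compare (hr : IsFusionKernel r R₀ R₁ mu sg B) (hmu : 0 < mu)
    {ε v : ℝ} (hε : 0 < ε) (hv : 0 < v)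
    {L : ℝ≥0} {M : ℝ} (hβM : c0 * v ^ ((2 : ℝ) / 3) ≤ M)
    (hL : LipschitzOnWith L (Fv r mu ε v) (Icc (c0 * v ^ ((2 : ℝ) / 3)) M))
    {Cc : ℝ} (hCc : ∀ a : ℝ, c0 * v ^ ((2 : ℝ) / 3) ≤ a → Cc ≤ rbarFn r mu ε (a, v))
    {t T : ℝ} (htT : t ≤ T) {A₁ A₂ : ℝ → ℝ}
    (h1c : ContinuousOn A₁ (Icc t T)) (h2c : ContinuousOn A₂ (Icc t T))
    (h1m : ∀ s ∈ Icc t T, A₁ s ∈ Icc (c0 * v ^ ((2 : ℝ) / 3)) M)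
    (h2m : ∀ s ∈ Icc t T, A₂ s ∈ Icc (c0 * v ^ ((2 : ℝ) / 3)) M)
    (h1i : ∀ s ∈ Ico t T, HasDerivWithinAt A₁ (FvC r mu ε v M (A₁ s)) (Ici s) s)
    (h2i : ∀ s ∈ Ico t T, HasDerivWithinAt A₂ (FvC r mu ε v M (A₂ s)) (Ici s) s)
    (h1d : ∀ s ∈ Ioo t T, HasDerivAt A₁ (Fv r mu ε v (A₁ s)) s)
    (h2d : ∀ s ∈ Ioo t T, HasDerivAt A₂ (Fv r mu ε v (A₂ s)) s)
    (h0 : A₂ t ≤ A₁ t) :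
    ∀ s ∈ Icc t T, 0 ≤ A₁ s - A₂ s ∧
      A₁ s - A₂ s ≤ Real.exp (-(Cc * (s - t)) / ε) * (A₁ t - A₂ t) := by
  set β := c0 * v ^ ((2 : ℝ) / 3) with hβdef
  have hLc : LipschitzWith L (FvC r mu ε v M) := FvC_lipschitz hβM hL
  -- ordering via uniqueness
  have hord : ∀ s ∈ Icc t T, A₂ s ≤ A₁ s := by
    by_contra hcon
    push_neg at hcon
    obtain ⟨s₁, hs₁, hlt⟩ := hcon
    have hivt : (0 : ℝ) ∈ (fun s => A₁ s - A₂ s) '' Icc t s₁ := by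
      apply intermediate_value_Icc' hs₁.1
        ((h1c.sub h2c).mono (Icc_subset_Icc le_rfl hs₁.2))
      exact ⟨by simp only [Pi.sub_apply]; linarith, by simp only [Pi.sub_apply]; linarith⟩
    obtain ⟨s₂, hs₂, hDs₂⟩ := hivt
    have heq12 : A₁ s₂ = A₂ s₂ := by
      have : A₁ s₂ - A₂ s₂ = 0 := hDs₂
      linarith
    have huniq : EqOn A₁ A₂ (Icc s₂ T) := by
      refine ODE_solution_unique_of_mem_Icc_right
        (v := fun _ x => FvC r mu ε v M x) (s := fun _ => (univ : Set ℝ)) (K := L)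
        (fun _ _ => hLc.lipschitzOnWith)
        (h1c.mono (Icc_subset_Icc hs₂.1 le_rfl))
        (fun u hu => h1i u ⟨le_trans hs₂.1 hu.1, hu.2⟩) (fun _ _ => mem_univ _)
        (h2c.mono (Icc_subset_Icc hs₂.1 le_rfl))
        (fun u hu => h2i u ⟨le_trans hs₂.1 hu.1, hu.2⟩) (fun _ _ => mem_univ _) heq12
    have : A₁ s₁ = A₂ s₁ := huniq ⟨hs₂.2, hs₁.2⟩
    exact absurd this (ne_of_lt hlt)
  -- Gronwall decay
  intro s hs
  refine ⟨by linarith [hord s hs], ?_⟩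
  have hanti : AntitoneOn (fun u => Real.exp (Cc / ε * u) * (A₁ u - A₂ u)) (Icc t T) := by
    apply antitoneOn_of_deriv_nonpos (convex_Icc t T)
    · exact (Real.continuous_exp.comp (continuous_const.mul continuous_id)).continuousOn.mul
        (h1c.sub h2c)
    · intro u hu
      rw [interior_Icc] at hu
      exact ((((hasDerivAt_id u).const_mul (Cc / ε)).exp.mul
        ((h1d u hu).sub (h2d u hu))).differentiableAt).differentiableWithinAt
    · intro u hu
      rw [interior_Icc] at hu
      have hw : HasDerivAt (fun u => Real.exp (Cc / ε * u) * (A₁ u - A₂ u))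
          (Real.exp (Cc / ε * u) * (Cc / ε * 1) * (A₁ u - A₂ u) +
            Real.exp (Cc / ε * u) * (Fv r mu ε v (A₁ u) - Fv r mu ε v (A₂ u))) u :=
        (((hasDerivAt_id u).const_mul (Cc / ε)).exp.mul ((h1d u hu).sub (h2d u hu)))
      rw [hw.deriv]
      have hu' : u ∈ Icc t T := Ioo_subset_Icc_self hu
      have hD : 0 ≤ A₁ u - A₂ u := by linarith [hord u hu']
      have hexp : 0 < Real.exp (Cc / ε * u) := Real.exp_pos _
      rcases eq_or_lt_of_le (hord u hu') with heq | hlt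
      · rw [← heq]
        simp
      · have hdecr := Fv_decr hr hmu hε hv hCc (h2m u hu').1 hlt
        have hdecr' : Fv r mu ε v (A₁ u) - Fv r mu ε v (A₂ u) ≤
            -(Cc / ε) * (A₁ u - A₂ u) := by
          rw [show Cc / ε = ε⁻¹ * Cc by rw [div_eq_mul_inv]; ring]
          exact hdecr
        have h5 := mul_le_mul_of_nonneg_left hdecr' hexp.le
        nlinarith [h5]
  have hw := hanti ⟨le_rfl, htT⟩ hs hs.1
  simp only [] at hw
  have hexps : 0 < Real.exp (Cc / ε * s) := Real.exp_pos _
  have hkey : Real.exp (-(Cc * (s - t)) / ε) =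
      Real.exp (Cc / ε * t) / Real.exp (Cc / ε * s) := by
    rw [← Real.exp_sub]
    congr 1
    field_simp
    ring
  rw [hkey, div_mul_eq_mul_div, le_div_iff₀ hexps]
  calc (A₁ s - A₂ s) * Real.exp (Cc / ε * s)
      = Real.exp (Cc / ε * s) * (A₁ s - A₂ s) := mul_comm _ _
    _ ≤ Real.exp (Cc / ε * t) * (A₁ t - A₂ t) := hw
end AuxDT6

/-- exponential decay of the a-derivative of the dual transport solution:
`‖∂_a φ_ε(t)‖_∞ ≤ exp(−C(T−t)/ε)` for all small ε, with C independent of ε. -/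
theorem dual_transport_derivative_decay
    (mu sg R₀ R₁ B : ℝ) (hmu : 0 < mu)
    (R T : ℝ) (hR : 1 < R) (hT : 0 < T)
    (r : ℝ × ℝ → ℝ) (hr : IsFusionKernel r R₀ R₁ mu sg B)
    (δ₁ : ℝ) (hδ₁ : 0 < δ₁)
    (χ : ℝ × ℝ → ℝ)
    (hχ_smooth : ContDiffOn ℝ 1 χ IsoRegion)
    (hχ_v : ∀ η : ℝ × ℝ, η.2 ∉ Icc (1 / R) R → χ η = 0)
    (hχ_iso : ∀ η : ℝ × ℝ, η.1 ≤ c0 * η.2 ^ ((2 : ℝ) / 3) + δ₁ → χ η = 0)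
    -- ‖χ‖_∞ + ‖∂_a χ‖_∞ ≤ 1
    (hχ_norm : ∃ M₁ M₂ : ℝ, M₁ + M₂ ≤ 1 ∧ (∀ η ∈ IsoRegion, |χ η| ≤ M₁) ∧
      (∀ η ∈ IsoRegion, |da χ η| ≤ M₂))
    -- φ ε is, for each ε ∈ (0,1), the solution of the dual transport equation
    (φ : ℝ → ℝ → ℝ × ℝ → ℝ)
    (hφ_smooth : ∀ ε ∈ Ioo (0 : ℝ) 1,
      ContDiffOn ℝ 1 (fun q : ℝ × (ℝ × ℝ) => φ ε q.1 q.2)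
        (Icc (0 : ℝ) T ×ˢ IsoRegion))
    (hφ_bdd : ∀ ε ∈ Ioo (0 : ℝ) 1,
      ∃ M : ℝ, ∀ t ∈ Icc (0 : ℝ) T, ∀ η ∈ IsoRegion, |φ ε t η| + |da (φ ε t) η| ≤ M)
    (hφ_v : ∀ ε ∈ Ioo (0 : ℝ) 1, ∀ t ∈ Icc (0 : ℝ) T,
      ∀ η : ℝ × ℝ, η.2 ∉ Icc (1 / R) R → φ ε t η = 0)
    (hφ_term : ∀ ε ∈ Ioo (0 : ℝ) 1, ∀ η ∈ IsoRegion, φ ε T η = χ η)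
    (hφ_pde : ∀ ε ∈ Ioo (0 : ℝ) 1, ∀ t ∈ Icc (0 : ℝ) T, ∀ η ∈ IsoRegion,
      deriv (fun u => φ ε u η) t
        + ε⁻¹ * rbarFn r mu ε η * (c0 * η.2 ^ ((2 : ℝ) / 3) - η.1)
          * da (φ ε t) η = 0) :
    ∃ ε₀ ∈ Ioo (0 : ℝ) 1, ∃ C > (0 : ℝ),
      ∀ ε ∈ Ioo (0 : ℝ) 1, ε ≤ ε₀ →
        ∀ t ∈ Icc (0 : ℝ) T, ∀ η ∈ IsoRegion,
          |da (φ ε t) η| ≤ Real.exp (-(C * (T - t)) / ε) := by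
  classical
  obtain ⟨M₁, M₂, hM12, hM1, hM2⟩ := hχ_norm
  have hisoPt : ((c0 : ℝ), (1 : ℝ)) ∈ IsoRegion := ⟨one_pos, by simp⟩
  have hM₁0 : 0 ≤ M₁ := le_trans (abs_nonneg _) (hM1 _ hisoPt)
  have hM₂0 : 0 ≤ M₂ := le_trans (abs_nonneg _) (hM2 _ hisoPt)
  have hM₂1 : M₂ ≤ 1 := by linarith
  have hR0 : (0 : ℝ) < R := lt_trans one_pos hR
  have hiR : (0 : ℝ) < 1 / R := by positivity
  set α : ℝ := c0 * (1 / R) ^ ((2 : ℝ) / 3) with hαdef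
  have hα0 : 0 < α := mul_pos c0_pos (Real.rpow_pos_of_pos hiR _)
  set mV : ℝ := min ((1 / R) ^ sg) (R ^ sg) with hmVdef
  have hmV0 : 0 < mV := lt_min (Real.rpow_pos_of_pos hiR _) (Real.rpow_pos_of_pos hR0 _)
  have hαμ : 0 < α ^ mu := Real.rpow_pos_of_pos hα0 _
  set Cc : ℝ := R₀ * mV * (α ^ mu / (1 + α ^ mu)) with hCcdef
  have hCc0 : 0 < Cc :=
    mul_pos (mul_pos hr.R0_pos hmV0) (div_pos hαμ (by linarith))
  refine ⟨1 / 2, by norm_num, Cc, hCc0, ?_⟩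
  rintro ε hε hεhalf t ht η hη
  obtain ⟨a, v⟩ := η
  have hεpos : 0 < ε := hε.1
  have hε1 : ε ≤ 1 := le_of_lt hε.2
  set K := Real.exp (-(Cc * (T - t)) / ε) with hKdef
  have hK0 : 0 < K := Real.exp_pos _
  by_cases hvin : v ∈ Icc (1 / R) R
  case neg =>
    have hz : (fun x => φ ε t (x, v)) = fun _ => (0 : ℝ) :=
      funext fun x => hφ_v ε hε t ht (x, v) hvin
    have hda0 : da (φ ε t) (a, v) = 0 := by
      show deriv (fun x => φ ε t (x, v)) a = 0
      rw [hz, deriv_const]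
    rw [hda0, abs_zero]
    exact hK0.le
  case pos =>
  have hv1 : 1 / R ≤ v := hvin.1
  have hv2 : v ≤ R := hvin.2
  have hv0 : 0 < v := lt_of_lt_of_le hiR hv1
  set β : ℝ := c0 * v ^ ((2 : ℝ) / 3) with hβdef
  have hβ0 : 0 < β := mul_pos c0_pos (Real.rpow_pos_of_pos hv0 _)
  have hβa : β ≤ a := hη.2
  have hrbar : ∀ x : ℝ, β ≤ x → Cc ≤ rbarFn r mu ε (x, v) :=
    fun x hx => rbar_lower hr hmu hR hεpos hε1 hv1 hv2 hx
  set Φ : ℝ × (ℝ × ℝ) → ℝ := fun q => φ ε q.1 q.2 with hΦdef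
  have hΦ : ContDiffOn ℝ 1 Φ (Icc (0 : ℝ) T ×ˢ IsoRegion) := hφ_smooth ε hε
  -- Lipschitz bound for the terminal slice of χ
  have hχdiff : ∀ b₂ b₁ : ℝ, β < b₂ → b₂ ≤ b₁ → |χ (b₁, v) - χ (b₂, v)| ≤ M₂ * (b₁ - b₂) := by
    intro b₂ b₁ hb hb12
    have hf : ∀ x ∈ Icc b₂ b₁,
        HasDerivWithinAt (fun x => χ (x, v)) (da χ (x, v)) (Icc b₂ b₁) x := by
      intro x hx
      have hxβ : β < x := lt_of_lt_of_le hb hx.1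
      have hmem : ((x : ℝ), v) ∈ IsoOpen := ⟨hv0, hxβ⟩
      have hnh : IsoRegion ∈ 𝓝 ((x : ℝ), v) :=
        mem_interior_iff_mem_nhds.mp (isoOpen_subset_interior hmem)
      have hd : DifferentiableAt ℝ χ (x, v) :=
        (hχ_smooth.contDiffAt hnh).differentiableAt one_ne_zero
      have hds : DifferentiableAt ℝ (fun y : ℝ => χ (y, v)) x :=
        hd.comp x (differentiableAt_id.prodMk (differentiableAt_const v))
      exact hds.hasDerivAt.hasDerivWithinAt
    have hbd : ∀ x ∈ Ico b₂ b₁, ‖da χ (x, v)‖ ≤ M₂ := by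
      intro x hx
      exact hM2 (x, v) ⟨hv0, le_trans (le_of_lt hb) hx.1⟩
    have := norm_image_sub_le_of_norm_deriv_le_segment' hf hbd b₁ ⟨hb12, le_rfl⟩
    rwa [Real.norm_eq_abs] at this
  -- continuity of the spatial slice of φ at time t
  have hslice_cont : ContinuousOn (fun x => φ ε t (x, v)) (Ici β) := by
    have hmap : MapsTo (fun x : ℝ => ((t : ℝ), ((x : ℝ), v))) (Ici β)
        (Icc (0 : ℝ) T ×ˢ IsoRegion) := fun x hx => ⟨ht, ⟨hv0, hx⟩⟩
    exact hΦ.continuousOn.comp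
      ((continuous_const.prodMk (continuous_id.prodMk continuous_const)).continuousOn) hmap
  -- the key Lipschitz estimate for pairs strictly above the boundary
  have pair : ∀ a₂ a₁ : ℝ, β < a₂ → a₂ ≤ a₁ →
      |φ ε t (a₁, v) - φ ε t (a₂, v)| ≤ K * (a₁ - a₂) := by
    intro a₂ a₁ hb ha12
    rcases eq_or_lt_of_le ht.2 with htT | htT
    · -- t = T : terminal condition
      rw [htT] at hKdef ⊢
      have hK1 : K = 1 := by rw [hKdef]; simp
      rw [hφ_term ε hε (a₁, v) ⟨hv0, le_trans hb.le ha12⟩,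
        hφ_term ε hε (a₂, v) ⟨hv0, hb.le⟩, hK1, one_mul]
      calc |χ (a₁, v) - χ (a₂, v)| ≤ M₂ * (a₁ - a₂) := hχdiff a₂ a₁ hb ha12
        _ ≤ 1 * (a₁ - a₂) := mul_le_mul_of_nonneg_right hM₂1 (by linarith)
        _ = a₁ - a₂ := one_mul _
    · -- t < T : transport along characteristics
      have htT' : t ≤ T := le_of_lt htT
      have hβM : β ≤ a₁ := le_trans hb.le ha12
      obtain ⟨L, hL⟩ := Fv_lipschitzOnWith hr hεpos hv0 hβ0 hβM
      obtain ⟨A₁, hA₁0, hA₁c, hA₁m, hA₁up, hA₁i, hA₁d, hA₁s⟩ :=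
        flow_exists hr hεpos hv0 hβM hL htT' ⟨hβM, le_rfl⟩
      obtain ⟨A₂, hA₂0, hA₂c, hA₂m, hA₂up, hA₂i, hA₂d, hA₂s⟩ :=
        flow_exists hr hεpos hv0 hβM hL htT' ⟨hb.le, ha12⟩
      have hA₁s' := hA₁s (lt_of_lt_of_le hb ha12)
      have hA₂s' := hA₂s hb
      -- constancy of φ along a characteristic
      have hconst : ∀ A : ℝ → ℝ, ContinuousOn A (Icc t T) →
          (∀ s ∈ Icc t T, A s ∈ Icc β a₁) →
          (∀ s ∈ Ioo t T, HasDerivAt A (Fv r mu ε v (A s)) s) →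
          (∀ s ∈ Icc t T, β < A s) →
          φ ε t (A t, v) = χ (A T, v) := by
        intro A hAc hAm hAd hAs
        set g : ℝ → ℝ := fun s => φ ε s (A s, v) with hgdef
        have hgc : ContinuousOn g (Icc t T) := by
          have hmap : MapsTo (fun s : ℝ => (s, (A s, v))) (Icc t T)
              (Icc (0 : ℝ) T ×ˢ IsoRegion) := fun s hs =>
            ⟨⟨le_trans ht.1 hs.1, hs.2⟩, ⟨hv0, (hAm s hs).1⟩⟩
          exact hΦ.continuousOn.comp
            (continuousOn_id.prodMk (hAc.prodMk continuousOn_const)) hmap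
        have hgd : ∀ s ∈ Ioo t T, HasDerivAt g 0 s := by
          intro s hs
          have hs' : s ∈ Icc t T := Ioo_subset_Icc_self hs
          set q : ℝ × (ℝ × ℝ) := (s, (A s, v)) with hqdef
          have hqU : q ∈ interior (Icc (0 : ℝ) T ×ˢ IsoRegion) := by
            rw [interior_prod_eq, interior_Icc]
            exact ⟨⟨lt_of_le_of_lt ht.1 hs.1, hs.2⟩,
              isoOpen_subset_interior ⟨hv0, hAs s hs'⟩⟩
          have hd : DifferentiableAt ℝ Φ q :=
            (hΦ.contDiffAt (mem_interior_iff_mem_nhds.mp hqU)).differentiableAt one_ne_zero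
          have hγ : HasDerivAt (fun u : ℝ => (u, (A u, v)))
              ((1 : ℝ), ((Fv r mu ε v (A s)), (0 : ℝ))) s :=
            (hasDerivAt_id s).prodMk ((hAd s hs).prodMk (hasDerivAt_const s v))
          have hcomp : HasDerivAt g
              (fderiv ℝ Φ q ((1 : ℝ), ((Fv r mu ε v (A s)), (0 : ℝ)))) s :=
            by have := hd.hasFDerivAt.comp_hasDerivAt s hγ; exact this
          have h_t : HasDerivAt (fun u => φ ε u (A s, v))
              (fderiv ℝ Φ q ((1 : ℝ), ((0 : ℝ), (0 : ℝ)))) s :=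
            by have := hd.hasFDerivAt.comp_hasDerivAt s
                ((hasDerivAt_id s).prodMk (hasDerivAt_const s ((A s, v) : ℝ × ℝ))); exact this
          have h_a : HasDerivAt (fun x => φ ε s (x, v))
              (fderiv ℝ Φ q ((0 : ℝ), ((1 : ℝ), (0 : ℝ)))) (A s) :=
            by have := hd.hasFDerivAt.comp_hasDerivAt (A s)
                ((hasDerivAt_const (A s) s).prodMk
                  ((hasDerivAt_id (A s)).prodMk (hasDerivAt_const (A s) v))); exact this
          have pde := hφ_pde ε hε s ⟨le_trans ht.1 hs.1.le, hs.2.le⟩ (A s, v)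
            ⟨hv0, (hAm s hs').1⟩
          have e_t : deriv (fun u => φ ε u (A s, v)) s =
              fderiv ℝ Φ q ((1 : ℝ), ((0 : ℝ), (0 : ℝ))) := h_t.deriv
          have e_a : da (φ ε s) (A s, v) =
              fderiv ℝ Φ q ((0 : ℝ), ((1 : ℝ), (0 : ℝ))) := h_a.deriv
          have hvec : ((1 : ℝ), ((Fv r mu ε v (A s)), (0 : ℝ))) =
              ((1 : ℝ), ((0 : ℝ), (0 : ℝ))) +
                (Fv r mu ε v (A s)) • ((0 : ℝ), ((1 : ℝ), (0 : ℝ))) := by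
            simp [Prod.ext_iff]
          have hval : fderiv ℝ Φ q ((1 : ℝ), ((Fv r mu ε v (A s)), (0 : ℝ))) = 0 := by
            rw [hvec, (fderiv ℝ Φ q).map_add, (fderiv ℝ Φ q).map_smul, smul_eq_mul, ← e_t, ← e_a]
            have hFv_eq : Fv r mu ε v (A s) =
                ε⁻¹ * rbarFn r mu ε (A s, v) * (c0 * v ^ ((2 : ℝ) / 3) - A s) := rfl
            rw [hFv_eq]
            linarith [pde]
          rw [hval] at hcomp
          exact hcomp
        have hTconst : ∀ s₀ ∈ Ioo t T, g T = g s₀ := by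
          intro s₀ hs₀
          exact constant_of_has_deriv_right_zero
            (hgc.mono (Icc_subset_Icc hs₀.1.le le_rfl))
            (fun x hx => (hgd x ⟨lt_of_lt_of_le hs₀.1 hx.1, hx.2⟩).hasDerivWithinAt)
            T ⟨hs₀.2.le, le_rfl⟩
        have hne : (𝓝[Ioo t T] t).NeBot := by
          apply mem_closure_iff_nhdsWithin_neBot.mp
          rw [closure_Ioo (ne_of_lt htT)]
          exact ⟨le_rfl, htT'⟩
        have h1 : Tendsto g (𝓝[Ioo t T] t) (𝓝 (g t)) :=
          (hgc t ⟨le_rfl, htT'⟩).mono_left (nhdsWithin_mono t Ioo_subset_Icc_self)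
        have h2 : Tendsto g (𝓝[Ioo t T] t) (𝓝 (g T)) := by
          apply Tendsto.congr' _ (tendsto_const_nhds (α := ℝ) (f := 𝓝[Ioo t T] t))
          exact eventually_mem_nhdsWithin.mono fun s hsx => hTconst s hsx
        have hgtT : g t = g T := tendsto_nhds_unique h1 h2
        have hAT_iso : ((A T : ℝ), v) ∈ IsoRegion := ⟨hv0, (hAm T ⟨htT', le_rfl⟩).1⟩
        calc φ ε t (A t, v) = g t := rfl
          _ = g T := hgtT
          _ = φ ε T (A T, v) := rfl
          _ = χ (A T, v) := hφ_term ε hε _ hAT_iso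
      have hc₁ := hconst A₁ hA₁c hA₁m hA₁d hA₁s'
      have hc₂ := hconst A₂ hA₂c hA₂m hA₂d hA₂s'
      have hcomp := flow_compare hr hmu hεpos hv0 hβM hL hrbar htT'
        hA₁c hA₂c hA₁m hA₂m hA₁i hA₂i hA₁d hA₂d (by rw [hA₁0, hA₂0]; exact ha12)
      obtain ⟨hD0, hDle⟩ := hcomp T ⟨htT', le_rfl⟩
      rw [hA₁0, hA₂0] at hDle
      have hA₂T : β < A₂ T := hA₂s' T ⟨htT', le_rfl⟩
      have hA₂₁T : A₂ T ≤ A₁ T := by linarith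
      rw [hA₁0] at hc₁
      rw [hA₂0] at hc₂
      rw [hc₁, hc₂]
      calc |χ (A₁ T, v) - χ (A₂ T, v)| ≤ M₂ * (A₁ T - A₂ T) := hχdiff _ _ hA₂T hA₂₁T
        _ ≤ 1 * (A₁ T - A₂ T) := mul_le_mul_of_nonneg_right hM₂1 (by linarith)
        _ = A₁ T - A₂ T := one_mul _
        _ ≤ K * (a₁ - a₂) := hDle
  -- extend the pair estimate to the boundary
  have key : ∀ a₂ a₁ : ℝ, β ≤ a₂ → a₂ ≤ a₁ →
      |φ ε t (a₁, v) - φ ε t (a₂, v)| ≤ K * (a₁ - a₂) := by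
    intro a₂ a₁ hb ha12
    rcases eq_or_lt_of_le hb with hbe | hbl
    · rcases eq_or_lt_of_le ha12 with h12e | h12l
      · rw [h12e]; simp
      · -- a₂ = β < a₁ : approximate from the right
        have hne : (𝓝[Ioo a₂ a₁] a₂).NeBot := by
          apply mem_closure_iff_nhdsWithin_neBot.mp
          rw [closure_Ioo (ne_of_lt h12l)]
          exact ⟨le_rfl, ha12⟩
        have hcont_at : Tendsto (fun x => φ ε t (x, v)) (𝓝[Ioo a₂ a₁] a₂)
            (𝓝 (φ ε t (a₂, v))) := by
          have := hslice_cont a₂ (by rw [← hbe]; exact mem_Ici.mpr le_rfl)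
          exact this.mono_left (nhdsWithin_mono _ (fun x hx => le_trans hb hx.1.le))
        have hlhs : Tendsto (fun x => |φ ε t (a₁, v) - φ ε t (x, v)|)
            (𝓝[Ioo a₂ a₁] a₂) (𝓝 |φ ε t (a₁, v) - φ ε t (a₂, v)|) :=
          ((tendsto_const_nhds.sub hcont_at).abs)
        have hrhs : Tendsto (fun x => K * (a₁ - x)) (𝓝[Ioo a₂ a₁] a₂)
            (𝓝 (K * (a₁ - a₂))) := by
          apply Tendsto.mono_left _ nhdsWithin_le_nhds
          exact (tendsto_const_nhds.sub tendsto_id).const_mul K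
        refine le_of_tendsto_of_tendsto hlhs hrhs ?_
        filter_upwards [self_mem_nhdsWithin] with x hx
        exact pair x a₁ (by rw [hbe]; exact hx.1) hx.2.le
    · exact pair a₂ a₁ hbl ha12
  -- conclude the bound on the derivative via right slopes
  show |da (φ ε t) (a, v)| ≤ K
  by_cases hdiff : DifferentiableAt ℝ (fun x => φ ε t (x, v)) a
  · have hda : HasDerivAt (fun x => φ ε t (x, v)) (da (φ ε t) (a, v)) a := hdiff.hasDerivAt
    have hslope : Tendsto (slope (fun x => φ ε t (x, v)) a) (𝓝[≠] a)
        (𝓝 (da (φ ε t) (a, v))) := hasDerivAt_iff_tendsto_slope.mp hda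
    have hslope' : Tendsto (fun x => |slope (fun y => φ ε t (y, v)) a x|) (𝓝[>] a)
        (𝓝 |da (φ ε t) (a, v)|) :=
      (hslope.mono_left (nhdsWithin_mono a fun x hx => ne_of_gt hx)).abs
    refine le_of_tendsto hslope' ?_
    filter_upwards [self_mem_nhdsWithin] with x hx
    have hxa : a < x := hx
    have hsub : (0:ℝ) < x - a := by linarith
    have hb := key a x hβa hxa.le
    rw [slope_def_field, abs_div, abs_of_pos hsub, div_le_iff₀ hsub]
    exact hb
  · have : da (φ ε t) (a, v) = 0 := deriv_zero_of_not_differentiableAt hdiff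
    rw [this, abs_zero]
    exact hK0.le
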